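/- Equality in the Welch bound, i.e. max_{i≠j} |⟨ζ_i, ζ_j⟩| = √((C-d)/(d(C-1))), holds only if the frame is equiangular, i.e. |⟨ζ_i, ζ_j⟩| is the same constant for all i ≠ j. -/

import Mathlib

open scoped RealInnerProductSpace
open Finset

theorem welch_equality_only_if_equiangular (d C : ℕ) (hd : 1 ≤ d) (hdC : d ≤ C)
    (hC : 2 ≤ C)
    (ζ : Fin C → EuclideanSpace ℝ (Fin d)) (hnorm : ∀ i, ‖ζ i‖ = 1)
    (hub : ∀ i j : Fin C, i ≠ j →
      |⟪ζ i, ζ j⟫| ≤ Real.sqrt ((C - d : ℝ) / (d * (C - 1))))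
    (hattained : ∃ i j : Fin C, i ≠ j ∧
      |⟪ζ i, ζ j⟫| = Real.sqrt ((C - d : ℝ) / (d * (C - 1)))) :
    ∃ c : ℝ, ∀ i j : Fin C, i ≠ j → |⟪ζ i, ζ j⟫| = c := by
  set α2 : ℝ := ((C : ℝ) - d) / (d * ((C : ℝ) - 1)) with hα2
  have hd0 : (0:ℝ) < d := by exact_mod_cast hd
  have hC1 : (1:ℝ) ≤ (C:ℝ) - 1 := by
    have : (2:ℝ) ≤ C := by exact_mod_cast hC
    linarith
  have hCd : (0:ℝ) ≤ (C:ℝ) - d := by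
    have : (d:ℝ) ≤ C := by exact_mod_cast hdC
    linarith
  have hα2nn : 0 ≤ α2 := by positivity
  have hsqrt : Real.sqrt α2 ^ 2 = α2 := Real.sq_sqrt hα2nn
  have hself : ∀ i, ⟪ζ i, ζ i⟫ = 1 := by
    intro i
    rw [real_inner_self_eq_norm_sq, hnorm, one_pow]
  set g : Fin d → Fin d → ℝ := fun k l => ∑ i, ζ i k * ζ i l with hg
  -- Claim A : Frobenius norm identity
  have claimA : ∑ i, ∑ j, ⟪ζ i, ζ j⟫ ^ 2 = ∑ k, ∑ l, g k l ^ 2 := by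
    have e1 : ∀ i j : Fin C, ⟪ζ i, ζ j⟫ ^ 2
        = ∑ q : Fin d × Fin d, (ζ i q.1 * ζ i q.2) * (ζ j q.1 * ζ j q.2) := by
      intro i j
      rw [Fintype.sum_prod_type]
      simp only [PiLp.inner_apply, RCLike.inner_apply, conj_trivial, sq,
        Finset.sum_mul_sum]
      exact Finset.sum_congr rfl fun k _ => Finset.sum_congr rfl fun l _ => by ring
    have e2 : ∀ q : Fin d × Fin d, g q.1 q.2 ^ 2
        = ∑ p : Fin C × Fin C, (ζ p.1 q.1 * ζ p.1 q.2) * (ζ p.2 q.1 * ζ p.2 q.2) := by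
      intro q
      rw [sq, hg, Finset.sum_mul_sum]
      exact (Fintype.sum_prod_type (f := fun p : Fin C × Fin C =>
        ζ p.1 q.1 * ζ p.1 q.2 * (ζ p.2 q.1 * ζ p.2 q.2))).symm
    calc ∑ i, ∑ j, ⟪ζ i, ζ j⟫ ^ 2
        = ∑ p : Fin C × Fin C, ∑ q : Fin d × Fin d,
            (ζ p.1 q.1 * ζ p.1 q.2) * (ζ p.2 q.1 * ζ p.2 q.2) := by
          exact (Finset.sum_congr rfl fun i _ => Finset.sum_congr rfl fun j _ =>
            e1 i j).trans (Fintype.sum_prod_type (f := fun p : Fin C × Fin C =>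
              ∑ q : Fin d × Fin d, ζ p.1 q.1 * ζ p.1 q.2 * (ζ p.2 q.1 * ζ p.2 q.2))).symm
      _ = ∑ q : Fin d × Fin d, ∑ p : Fin C × Fin C,
            (ζ p.1 q.1 * ζ p.1 q.2) * (ζ p.2 q.1 * ζ p.2 q.2) := Finset.sum_comm
      _ = ∑ q : Fin d × Fin d, g q.1 q.2 ^ 2 :=
          Finset.sum_congr rfl fun q _ => (e2 q).symm
      _ = ∑ k, ∑ l, g k l ^ 2 :=
          Fintype.sum_prod_type (f := fun q : Fin d × Fin d => g q.1 q.2 ^ 2)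
  -- Claim C : trace is C
  have claimC : ∑ k, g k k = (C : ℝ) := by
    have h1 : ∀ i : Fin C, ∑ k, ζ i k * ζ i k = 1 := by
      intro i
      have := hself i
      simpa only [PiLp.inner_apply, RCLike.inner_apply, conj_trivial] using this
    simp only [hg]
    rw [Finset.sum_comm]
    simp [h1]
  -- Claim B : Welch lower bound
  have claimB : (C:ℝ) ^ 2 ≤ d * ∑ i, ∑ j, ⟪ζ i, ζ j⟫ ^ 2 := by
    rw [claimA, ← claimC]
    have h1 : (∑ k, g k k) ^ 2 ≤ (#(Finset.univ : Finset (Fin d)) : ℝ) * ∑ k, g k k ^ 2 := by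
      exact_mod_cast sq_sum_le_card_mul_sum_sq (s := (Finset.univ : Finset (Fin d)))
        (f := fun k => g k k)
    have h2 : ∑ k, g k k ^ 2 ≤ ∑ k, ∑ l, g k l ^ 2 :=
      Finset.sum_le_sum fun k _ =>
        Finset.single_le_sum (f := fun l => g k l ^ 2) (fun l _ => sq_nonneg _)
          (Finset.mem_univ k)
    have hcard : ((#(Finset.univ : Finset (Fin d))) : ℝ) = d := by simp
    calc (∑ k, g k k) ^ 2 ≤ (d:ℝ) * ∑ k, g k k ^ 2 := by rw [← hcard]; exact h1
      _ ≤ d * ∑ k, ∑ l, g k l ^ 2 := by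
          exact mul_le_mul_of_nonneg_left h2 (le_of_lt hd0)
  -- split into diagonal and off-diagonal parts
  set f : Fin C × Fin C → ℝ := fun p => ⟪ζ p.1, ζ p.2⟫ ^ 2 with hf
  have hsplit : ∑ i, ∑ j, ⟪ζ i, ζ j⟫ ^ 2
      = (C : ℝ) + ∑ p ∈ (Finset.univ : Finset (Fin C)).offDiag, f p := by
    rw [← Finset.sum_product' (f := fun i j => ⟪ζ i, ζ j⟫ ^ 2)]
    rw [← Finset.diag_union_offDiag (Finset.univ : Finset (Fin C)),
      Finset.sum_union (Finset.disjoint_diag_offDiag _)]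
    congr 1
    rw [Finset.sum_diag]
    simp [hself, hnorm]
  have hcard_off : ((#(Finset.univ : Finset (Fin C)).offDiag) : ℝ) = (C:ℝ)^2 - C := by
    rw [Finset.offDiag_card]
    have h1 : C ≤ C * C := Nat.le_mul_of_pos_left C (by omega)
    have h2 : ((C * C - C : ℕ) : ℝ) = (C:ℝ) * C - C := by
      push_cast [Nat.cast_sub h1]; ring
    simp only [Finset.card_univ, Fintype.card_fin] at h2 ⊢
    rw [h2]; ring
  -- each off-diagonal term is at most α2
  have hterm : ∀ p ∈ (Finset.univ : Finset (Fin C)).offDiag, f p ≤ α2 := by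
    intro p hp
    rw [Finset.mem_offDiag] at hp
    have h := hub p.1 p.2 hp.2.2
    calc f p = |⟪ζ p.1, ζ p.2⟫| ^ 2 := by rw [sq_abs]
      _ ≤ Real.sqrt α2 ^ 2 := pow_le_pow_left₀ (abs_nonneg _) h 2
      _ = α2 := hsqrt
  -- sum of deficits is zero
  have hzero : ∑ p ∈ (Finset.univ : Finset (Fin C)).offDiag, (α2 - f p) = 0 := by
    have hge : 0 ≤ ∑ p ∈ (Finset.univ : Finset (Fin C)).offDiag, (α2 - f p) :=
      Finset.sum_nonneg fun p hp => by linarith [hterm p hp]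
    have hle : ∑ p ∈ (Finset.univ : Finset (Fin C)).offDiag, (α2 - f p) ≤ 0 := by
      rw [Finset.sum_sub_distrib, Finset.sum_const, nsmul_eq_mul, hcard_off]
      have hoff : (C:ℝ)*((C:ℝ)-d)/d ≤ ∑ p ∈ (Finset.univ : Finset (Fin C)).offDiag, f p := by
        have hB := claimB
        rw [hsplit] at hB
        rw [div_le_iff₀ hd0]
        nlinarith [hB]
      have heq : ((C:ℝ)^2 - C) * α2 = (C:ℝ)*((C:ℝ)-d)/d := by
        rw [hα2]
        field_simp
      linarith
    linarith
  have hall : ∀ p ∈ (Finset.univ : Finset (Fin C)).offDiag, α2 - f p = 0 := by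
    rw [← Finset.sum_eq_zero_iff_of_nonneg fun p hp => by linarith [hterm p hp]]
    exact hzero
  refine ⟨Real.sqrt α2, fun i j hij => ?_⟩
  have hmem : (i, j) ∈ (Finset.univ : Finset (Fin C)).offDiag := by
    rw [Finset.mem_offDiag]; exact ⟨Finset.mem_univ _, Finset.mem_univ _, hij⟩
  have h0 := hall (i, j) hmem
  have hfij : ⟪ζ i, ζ j⟫ ^ 2 = α2 := by
    have h2 : f (i, j) = α2 := by linarith
    simpa only [hf] using h2
  rw [← Real.sqrt_sq_eq_abs, hfij]
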